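/- With c₁, c₂ and ρ's as defined, the derivative of 1 - c₁(β)c₂(β) with respect to β equals 16qβ/((1-β²)²(ρ₂⁻ - ρ₁⁻)(ρ₂⁺ - ρ₁⁺)), and the derivative of c₂(β)(1 - c₁(β)) equals (2ρ₂⁻²(1-β)² + 4q(1+β)²)/((1+β)²(1-β)²(ρ₂⁻ - ρ₁⁻)(ρ₂⁺ - ρ₁⁺)). -/

import Mathlib

set_option maxHeartbeats 1600000


theorem c_product_derivatives (q μp μm : ℝ) (hq : 0 < q)
    (ρ1m ρ2m ρ1p ρ2p : ℝ)
    (hρ1m : ρ1m = -(μm + Real.sqrt (μm^2 + 2*q)))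
    (hρ2m : ρ2m = -μm + Real.sqrt (μm^2 + 2*q))
    (hρ1p : ρ1p = -(μp + Real.sqrt (μp^2 + 2*q)))
    (hρ2p : ρ2p = -μp + Real.sqrt (μp^2 + 2*q))
    (c₁ c₂ : ℝ → ℝ)
    (hc₁ : ∀ β, c₁ β = ((1+β)*ρ1p - (1-β)*ρ1m) / ((1-β)*(ρ2m - ρ1m)))
    (hc₂ : ∀ β, c₂ β = ((1+β)*ρ2p - (1-β)*ρ2m) / ((1+β)*(ρ2p - ρ1p))) :
    ∀ β ∈ Set.Ioo (-1 : ℝ) 1,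
      HasDerivAt (fun b => 1 - c₁ b * c₂ b)
        (16*q*β / ((1-β^2)^2 * (ρ2m - ρ1m) * (ρ2p - ρ1p))) β ∧
      HasDerivAt (fun b => c₂ b * (1 - c₁ b))
        ((2*ρ2m^2*(1-β)^2 + 4*q*(1+β)^2) /
          ((1+β)^2 * (1-β)^2 * (ρ2m - ρ1m) * (ρ2p - ρ1p))) β := by
  -- basic facts about the square roots
  have hm0 : (0:ℝ) < μm^2 + 2*q := by positivity
  have hp0 : (0:ℝ) < μp^2 + 2*q := by positivity
  set s := Real.sqrt (μm^2 + 2*q) with hs_def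
  set t := Real.sqrt (μp^2 + 2*q) with ht_def
  have hs2 : s^2 = μm^2 + 2*q := Real.sq_sqrt hm0.le
  have ht2 : t^2 = μp^2 + 2*q := Real.sq_sqrt hp0.le
  have hs_pos : 0 < s := Real.sqrt_pos.mpr hm0
  have ht_pos : 0 < t := Real.sqrt_pos.mpr hp0
  have hK : ρ2m - ρ1m ≠ 0 := by
    rw [hρ1m, hρ2m]; nlinarith
  have hM : ρ2p - ρ1p ≠ 0 := by
    rw [hρ1p, hρ2p]; nlinarith
  have hρ2p_pos : 0 < ρ2p := by
    rw [hρ2p]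
    nlinarith [Real.sq_sqrt hp0.le, Real.sqrt_nonneg (μp^2 + 2*q)]
  have hρ2p0 : ρ2p ≠ 0 := ne_of_gt hρ2p_pos
  have hmm : ρ1m * ρ2m = -(2*q) := by
    rw [hρ1m, hρ2m]; nlinarith
  have hpp : ρ1p * ρ2p = -(2*q) := by
    rw [hρ1p, hρ2p]; nlinarith
  -- eliminate q and ρ1p
  have hqE : q = -(ρ1m * ρ2m)/2 := by linarith
  have hρ1pE : ρ1p = (ρ1m * ρ2m)/ρ2p := by
    field_simp
    rw [hpp, hmm]
  intro β hβ
  obtain ⟨hβ1, hβ2⟩ := hβ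
  have hv : (1:ℝ) - β ≠ 0 := by linarith
  have hu : (1:ℝ) + β ≠ 0 := by linarith
  -- derivatives of c₁ and c₂
  have e₁ : c₁ = fun b => ((1+b)*ρ1p - (1-b)*ρ1m) / ((1-b)*(ρ2m - ρ1m)) :=
    funext hc₁
  have e₂ : c₂ = fun b => ((1+b)*ρ2p - (1-b)*ρ2m) / ((1+b)*(ρ2p - ρ1p)) :=
    funext hc₂
  have hden1 : (1-β)*(ρ2m - ρ1m) ≠ 0 := mul_ne_zero hv hK
  have hden2 : (1+β)*(ρ2p - ρ1p) ≠ 0 := mul_ne_zero hu hM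
  have hN1 : HasDerivAt (fun b : ℝ => (1+b)*ρ1p - (1-b)*ρ1m) (ρ1p + ρ1m) β := by
    have h1 : HasDerivAt (fun b : ℝ => (1+b)*ρ1p) ρ1p β := by
      simpa using (((hasDerivAt_id β).const_add 1).mul_const ρ1p)
    have h2 : HasDerivAt (fun b : ℝ => (1-b)*ρ1m) (-ρ1m) β := by
      simpa using (((hasDerivAt_id β).const_sub 1).mul_const ρ1m)
    simpa using h1.fun_sub h2
  have hD1 : HasDerivAt (fun b : ℝ => (1-b)*(ρ2m - ρ1m)) (-(ρ2m - ρ1m)) β := by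
    simpa using (((hasDerivAt_id β).const_sub 1).mul_const (ρ2m - ρ1m))
  have hN2 : HasDerivAt (fun b : ℝ => (1+b)*ρ2p - (1-b)*ρ2m) (ρ2p + ρ2m) β := by
    have h1 : HasDerivAt (fun b : ℝ => (1+b)*ρ2p) ρ2p β := by
      simpa using (((hasDerivAt_id β).const_add 1).mul_const ρ2p)
    have h2 : HasDerivAt (fun b : ℝ => (1-b)*ρ2m) (-ρ2m) β := by
      simpa using (((hasDerivAt_id β).const_sub 1).mul_const ρ2m)
    simpa using h1.fun_sub h2
  have hD2 : HasDerivAt (fun b : ℝ => (1+b)*(ρ2p - ρ1p)) (ρ2p - ρ1p) β := by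
    simpa using (((hasDerivAt_id β).const_add 1).mul_const (ρ2p - ρ1p))
  have d1 : HasDerivAt c₁ (2*ρ1p/((1-β)^2*(ρ2m - ρ1m))) β := by
    rw [e₁]
    have := hN1.div hD1 hden1
    refine this.congr_deriv ?_
    field_simp
    ring
  have d2 : HasDerivAt c₂ (2*ρ2m/((1+β)^2*(ρ2p - ρ1p))) β := by
    rw [e₂]
    have := hN2.div hD2 hden2
    refine this.congr_deriv ?_
    field_simp
    ring
  have hw : (1:ℝ) - β^2 ≠ 0 := by nlinarith
  constructor
  · have := ((d1.fun_mul d2).const_sub 1)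
    refine this.congr_deriv ?_
    rw [hc₁ β, hc₂ β]
    have num_eq : -(2*ρ1p*(1+β)*((1+β)*ρ2p - (1-β)*ρ2m)
        + 2*ρ2m*(1-β)*((1+β)*ρ1p - (1-β)*ρ1m)) = 16*q*β := by
      linear_combination (-2*(1+β)^2)*hpp + (2*(1-β)^2)*hmm
    rw [← num_eq]
    field_simp
    ring
  · have h0 := (d2.fun_mul ((d1.const_sub 1)))
    have h' : HasDerivAt (fun b => c₂ b * (1 - c₁ b))
        (2*ρ2m/((1+β)^2*(ρ2p - ρ1p)) * (1 - c₁ β) +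
          c₂ β * -(2*ρ1p/((1-β)^2*(ρ2m - ρ1m)))) β := by
      simpa using h0
    convert h' using 1
    rw [hc₁ β, hc₂ β]
    have num2_eq : 2*ρ2m*(1-β)*((1-β)*(ρ2m-ρ1m) - ((1+β)*ρ1p - (1-β)*ρ1m))
        - 2*ρ1p*(1+β)*((1+β)*ρ2p - (1-β)*ρ2m)
        = 2*ρ2m^2*(1-β)^2 + 4*q*(1+β)^2 := by
      linear_combination (-2*(1+β)^2)*hpp
    rw [← num2_eq]
    field_simp
    ring
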